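/- Let q, r : ℝ → ℂ be continuous with qr integrable, E(x) = exp((i/2)∫_{-∞}^x q r), and ζ ∈ ℂ. Suppose (α̃, β̃) : ℝ → ℂ² is a differentiable solution of the Kaup–Newell linear system α̃' = -iζ²α̃ + ζ q̃ β̃, β̃' = ζ r̃ α̃ + iζ² β̃, where q̃(x) = E(x) q(x) and r̃(x) = E(x)⁻¹ r(x). Then (α, β) := (α̃, E·β̃) solves the Chen–Lee–Liu linear system α' = -iζ² α + ζ q β, β' = ζ r α + (iζ² + (i/2) q r) β. -/
import Mathlib


open Complex MeasureTheory

theorem stmt1 (q r : ℝ → ℂ) (hq : Continuous q) (hr : Continuous r)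
    (hint : Integrable (fun y => q y * r y))
    (E : ℝ → ℂ)
    (hE : ∀ x, E x = Complex.exp ((I / 2) * ∫ y in Set.Iic x, q y * r y))
    (ζ : ℂ) (qt rt : ℝ → ℂ)
    (hqt : ∀ x, qt x = E x * q x) (hrt : ∀ x, rt x = (E x)⁻¹ * r x)
    (αt βt : ℝ → ℂ)
    (hαt : ∀ x, HasDerivAt αt (-I * ζ ^ 2 * αt x + ζ * qt x * βt x) x)
    (hβt : ∀ x, HasDerivAt βt (ζ * rt x * αt x + I * ζ ^ 2 * βt x) x) :
    (∀ x, HasDerivAt αt (-I * ζ ^ 2 * αt x + ζ * q x * (E x * βt x)) x) ∧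
    (∀ x, HasDerivAt (fun x => E x * βt x)
      (ζ * r x * αt x + (I * ζ ^ 2 + (I / 2) * q x * r x) * (E x * βt x)) x) := by
  have hEne : ∀ x, E x ≠ 0 := fun x => by rw [hE x]; exact Complex.exp_ne_zero _
  -- derivative of the Iic integral
  have hF : ∀ x, HasDerivAt (fun x => ∫ y in Set.Iic x, q y * r y) (q x * r x) x := by
    intro x
    have heq : ∀ t : ℝ, (∫ y in Set.Iic t, q y * r y)
        = (∫ y in Set.Iic (0:ℝ), q y * r y) + ∫ y in (0:ℝ)..t, q y * r y := by
      intro t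
      rw [← intervalIntegral.integral_Iic_sub_Iic hint.integrableOn hint.integrableOn]
      ring
    have h1 : HasDerivAt (fun t => (∫ y in Set.Iic (0:ℝ), q y * r y)
        + ∫ y in (0:ℝ)..t, q y * r y) (q x * r x) x :=
      HasDerivAt.const_add _ (intervalIntegral.integral_hasDerivAt_right
        (hint.intervalIntegrable (a := 0) (b := x))
        ((hq.mul hr).stronglyMeasurableAtFilter _ _)
        ((hq.mul hr).continuousAt))
    exact h1.congr_of_eventuallyEq (Filter.Eventually.of_forall heq)
  have hEderiv : ∀ x, HasDerivAt E ((I / 2) * (q x * r x) * E x) x := by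
    intro x
    have h := (((hF x).const_mul (I / 2)).cexp)
    have : HasDerivAt E (Complex.exp ((I / 2) * ∫ y in Set.Iic x, q y * r y)
        * ((I / 2) * (q x * r x))) x := by
      refine HasDerivAt.congr_of_eventuallyEq ?_ (Filter.Eventually.of_forall hE)
      simpa [mul_comm] using h
    rw [hE x]; convert this using 1; ring
  constructor
  · intro x
    have := hαt x
    rw [hqt x] at this
    convert this using 1; ring
  · intro x
    have h := (hEderiv x).mul (hβt x)
    have : HasDerivAt (fun x => E x * βt x)
        ((I / 2) * (q x * r x) * E x * βt x
          + E x * (ζ * rt x * αt x + I * ζ ^ 2 * βt x)) x := h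
    convert this using 1
    rw [hrt x]
    field_simp [hEne x]
    ring
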